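/- Let p₀ be the uniform distribution on a set of size d, let B be a finite set of M sign vectors b ∈ {−1,1}^d each satisfying ∑_i b_i = 0, let ε ∈ [0,1], and define q_{b,ε}(i) = (1 + ε·b_i)/d. Let P₀ = p₀^⊗N and P₁ = (1/M)·∑_{b∈B} q_{b,ε}^⊗N be the N-fold product and mixture-of-products distributions respectively. Then χ²(P₁, P₀) + 1 ≤ (1/M²)·∑_{b,b′∈B} exp((N·ε²/d)·⟨b, b′⟩). -/

import Mathlib

open Finset in
/-- Chi-squared bound between a mixture of product perturbations and the
product uniform distribution:
`χ²(P₁,P₀) + 1 ≤ (1/M²) ∑_{b,b'∈B} exp((Nε²/d)·⟨b,b'⟩)`. -/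
theorem chiSq_mixture_product_bound (d N : ℕ) (hd : 0 < d)
    (ε : ℝ) (hε : ε ∈ Set.Icc (0:ℝ) 1)
    (B : Finset (Fin d → ℝ)) (hBne : B.Nonempty)
    (hBsign : ∀ b ∈ B, ∀ i, b i = 1 ∨ b i = -1)
    (hBsum : ∀ b ∈ B, ∑ i, b i = 0) :
    (∑ ω : Fin N → Fin d,
        ((B.card : ℝ)⁻¹ * ∑ b ∈ B, ∏ j, (1 + ε * b (ω j)) / d)^2 /
          ∏ j : Fin N, (1/(d:ℝ))) ≤
      ((B.card : ℝ)^2)⁻¹ * ∑ b ∈ B, ∑ b' ∈ B,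
        Real.exp ((N * ε^2 / d) * ∑ i, b i * b' i) := by
  obtain ⟨hε0, hε1⟩ := hε
  have hd' : (0:ℝ) < d := by exact_mod_cast hd
  have hdN : ((d:ℝ))^N ≠ 0 := by positivity
  have hDen : (∏ j : Fin N, (1/(d:ℝ))) = ((d:ℝ)^N)⁻¹ := by
    simp [one_div]
  set M := (B.card : ℝ) with hM
  -- Step 1: pointwise expansion of the summand
  have step1 : ∀ ω : Fin N → Fin d,
      (M⁻¹ * ∑ b ∈ B, ∏ j, (1 + ε * b (ω j)) / d)^2 / ∏ j : Fin N, (1/(d:ℝ))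
        = (M^2)⁻¹ * ∑ b ∈ B, ∑ b' ∈ B,
            (∏ j, (1 + ε * b (ω j)) / d) * (∏ j, (1 + ε * b' (ω j)) / d) * (d:ℝ)^N := by
    intro ω
    rw [hDen, div_eq_mul_inv, inv_inv, mul_pow, sq (∑ b ∈ B, ∏ j, (1 + ε * b (ω j)) / d),
      Finset.sum_mul_sum]
    simp_rw [← Finset.sum_mul]
    ring
  -- Step 2: sum over ω for a fixed pair
  have step2 : ∀ b b' : Fin d → ℝ,
      (∑ ω : Fin N → Fin d,
        (∏ j, (1 + ε * b (ω j)) / d) * ∏ j, (1 + ε * b' (ω j)) / d)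
      = (∑ i, (1 + ε * b i) / d * ((1 + ε * b' i) / d))^N := by
    intro b b'
    rw [Fintype.sum_pow]
    exact Finset.sum_congr rfl fun ω _ => (Finset.prod_mul_distrib).symm
  have hrw : (∑ ω : Fin N → Fin d,
        (M⁻¹ * ∑ b ∈ B, ∏ j, (1 + ε * b (ω j)) / d)^2 /
          ∏ j : Fin N, (1/(d:ℝ)))
      = (M^2)⁻¹ * ∑ b ∈ B, ∑ b' ∈ B,
          (∑ i, (1 + ε * b i) / d * ((1 + ε * b' i) / d))^N * (d:ℝ)^N := by
    calc (∑ ω : Fin N → Fin d,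
        (M⁻¹ * ∑ b ∈ B, ∏ j, (1 + ε * b (ω j)) / d)^2 /
          ∏ j : Fin N, (1/(d:ℝ)))
        = ∑ ω : Fin N → Fin d, (M^2)⁻¹ * ∑ b ∈ B, ∑ b' ∈ B,
            (∏ j, (1 + ε * b (ω j)) / d) * (∏ j, (1 + ε * b' (ω j)) / d) * (d:ℝ)^N :=
          Finset.sum_congr rfl fun ω _ => step1 ω
      _ = (M^2)⁻¹ * ∑ b ∈ B, ∑ b' ∈ B, ∑ ω : Fin N → Fin d,
            (∏ j, (1 + ε * b (ω j)) / d) * (∏ j, (1 + ε * b' (ω j)) / d) * (d:ℝ)^N := by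
          rw [← Finset.mul_sum]
          congr 1
          rw [Finset.sum_comm]
          exact Finset.sum_congr rfl fun b _ => Finset.sum_comm
      _ = (M^2)⁻¹ * ∑ b ∈ B, ∑ b' ∈ B,
            (∑ i, (1 + ε * b i) / d * ((1 + ε * b' i) / d))^N * (d:ℝ)^N := by
          congr 1
          refine Finset.sum_congr rfl fun b _ => Finset.sum_congr rfl fun b' _ => ?_
          rw [← Finset.sum_mul, step2]
  rw [hrw]
  -- Step 3: per-pair bound
  have key : ∀ b ∈ B, ∀ b' ∈ B,
      (∑ i, (1 + ε * b i) / d * ((1 + ε * b' i) / d))^N * (d:ℝ)^N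
        ≤ Real.exp ((N * ε^2 / d) * ∑ i, b i * b' i) := by
    intro b hb b' hb'
    set s : ℝ := ∑ i, b i * b' i with hs
    have h1 := hBsum b hb
    have h2 := hBsum b' hb'
    have hsum : (∑ i, (1 + ε * b i) / d * ((1 + ε * b' i) / d))
        = (1 + ε^2 * s / d) / d := by
      have he : ∀ i : Fin d, (1 + ε * b i) / d * ((1 + ε * b' i) / d)
          = (1 + ε * b i + ε * b' i + ε^2 * (b i * b' i)) / (d:ℝ)^2 := by
        intro i; field_simp; ring
      rw [Finset.sum_congr rfl fun i _ => he i, ← Finset.sum_div,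
        Finset.sum_add_distrib, Finset.sum_add_distrib, Finset.sum_add_distrib,
        ← Finset.mul_sum, ← Finset.mul_sum, ← Finset.mul_sum, h1, h2, ← hs]
      simp only [Finset.sum_const, Finset.card_univ, Fintype.card_fin,
        nsmul_eq_mul, mul_one, mul_zero, add_zero]
      field_simp
    rw [hsum, div_pow, div_mul_cancel₀ _ hdN]
    have hs_lb : (-(d:ℝ)) ≤ s := by
      have hterm : ∀ i : Fin d, (-1:ℝ) ≤ b i * b' i := by
        intro i
        rcases hBsign b hb i with h | h <;> rcases hBsign b' hb' i with h' | h' <;>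
          simp [h, h']
      calc (-(d:ℝ)) = ∑ _i : Fin d, (-1:ℝ) := by simp
        _ ≤ s := Finset.sum_le_sum fun i _ => hterm i
    have hx : (0:ℝ) ≤ 1 + ε^2 * s / d := by
      have hnum : (0:ℝ) ≤ d + ε^2 * s := by
        nlinarith [mul_nonneg (sq_nonneg ε) (by linarith : (0:ℝ) ≤ s + d),
          mul_nonneg hd'.le (mul_nonneg (by linarith : (0:ℝ) ≤ 1 - ε)
            (by linarith : (0:ℝ) ≤ 1 + ε))]
      have : 1 + ε^2 * s / d = (d + ε^2 * s) / d := by field_simp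
      rw [this]
      exact div_nonneg hnum hd'.le
    have h1e : 1 + ε^2 * s / d ≤ Real.exp (ε^2 * s / d) :=
      by linarith [Real.add_one_le_exp (ε^2 * s / d)]
    calc (1 + ε^2 * s / d)^N ≤ (Real.exp (ε^2 * s / d))^N :=
          pow_le_pow_left₀ hx h1e N
      _ = Real.exp ((N * ε^2 / d) * s) := by
          rw [← Real.exp_nat_mul]
          congr 1
          field_simp
  refine mul_le_mul_of_nonneg_left ?_ (by positivity)
  exact Finset.sum_le_sum fun b hb => Finset.sum_le_sum fun b' hb' => key b hb b' hb'
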